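/- The group G(D̃₄^{(1,1)}) defined by the elliptic Dynkin presentation is isomorphic to the group G'(D̃₄^{(1,1)}) defined by the new presentation with infinitely many generators tᵢ (i ∈ ℤ); i.e. there exists a group isomorphism G(D̃₄^{(1,1)}) ≃ G'(D̃₄^{(1,1)}). -/

import Mathlib

namespace EllipticD4Aux

variable {G : Type*} [Group G]

lemma conj_braid (a s : G) (ha : a*s*a = s*a*s) : a⁻¹*s*a = s*a*s⁻¹ := by
  calc a⁻¹*s*a = a⁻¹*(s*a*s)*s⁻¹ := by group
    _ = a⁻¹*(a*s*a)*s⁻¹ := by rw [ha]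
    _ = s*a*s⁻¹ := by group

lemma conj_braid_inv (b s : G) (hb : b*s*b = s*b*s) : b⁻¹*s⁻¹*b = s*b⁻¹*s⁻¹ := by
  have h := conj_braid b s hb
  calc b⁻¹*s⁻¹*b = (b⁻¹*s*b)⁻¹ := by group
    _ = (s*b*s⁻¹)⁻¹ := by rw [h]
    _ = s*b⁻¹*s⁻¹ := by group

lemma braid_step (a b s : G) (ha : a*s*a = s*a*s) (hb : b*s*b = s*b*s)
    (hP : s*(a*b)*s*(a*b) = (a*b)*s*(a*b)*s) :
    (a*b*a⁻¹)*s*(a*b*a⁻¹) = s*(a*b*a⁻¹)*s := by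
  have h1 := conj_braid a s ha
  have h2 := conj_braid_inv b s hb
  calc (a*b*a⁻¹)*s*(a*b*a⁻¹)
      = a*b*(a⁻¹*s*a)*b*a⁻¹ := by group
    _ = a*b*(s*a*s⁻¹)*b*a⁻¹ := by rw [h1]
    _ = a*b*s*a*b*(b⁻¹*s⁻¹*b)*a⁻¹ := by group
    _ = a*b*s*a*b*(s*b⁻¹*s⁻¹)*a⁻¹ := by rw [h2]
    _ = ((a*b)*s*(a*b)*s)*(b⁻¹*s⁻¹*a⁻¹) := by group
    _ = (s*(a*b)*s*(a*b))*(b⁻¹*s⁻¹*a⁻¹) := by rw [← hP]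
    _ = s*(a*b)*(s*a*s⁻¹)*a⁻¹ := by group
    _ = s*(a*b)*(a⁻¹*s*a)*a⁻¹ := by rw [← h1]
    _ = s*(a*b*a⁻¹)*s := by group

lemma braid_step' (a c s : G) (ha : a*s*a = s*a*s) (hc : c*s*c = s*c*s)
    (hP : s*(c*a)*s*(c*a) = (c*a)*s*(c*a)*s) :
    (a⁻¹*c*a)*s*(a⁻¹*c*a) = s*(a⁻¹*c*a)*s := by
  have key := braid_step (G := Gᵐᵒᵖ) (MulOpposite.op a) (MulOpposite.op c) (MulOpposite.op s)
    (by simpa only [MulOpposite.op_mul, MulOpposite.op_inv, mul_assoc] using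
      congrArg MulOpposite.op ha)
    (by simpa only [MulOpposite.op_mul, MulOpposite.op_inv, mul_assoc] using
      congrArg MulOpposite.op hc)
    (by simpa only [MulOpposite.op_mul, MulOpposite.op_inv, mul_assoc] using
      congrArg MulOpposite.op hP.symm)
  apply MulOpposite.op_injective
  simpa only [MulOpposite.op_mul, MulOpposite.op_inv, mul_assoc] using key

/-- The relation `(P3)` is a consequence of the relations of `G'`. -/
lemma P3_of_braid (x0 x1 x2 s : G)
    (b0 : x0*s*x0 = s*x0*s) (b1 : x1*s*x1 = s*x1*s) (b2 : x2*s*x2 = s*x2*s)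
    (h : x2*x1 = x1*x0) :
    s*(x1*x0)*s*(x1*x0) = (x1*x0)*s*(x1*x0)*s := by
  calc s*(x1*x0)*s*(x1*x0)
      = s*(x2*x1)*(s*x1*x0) := by rw [h]; group
    _ = s*x2*(s*x1*s)*x0 := by rw [← b1]; group
    _ = (x2*s*x2)*x1*(s*x0) := by rw [b2]; group
    _ = x2*s*(x1*x0)*(s*x0) := by rw [← h]; group
    _ = x2*s*x1*(s*x0*s) := by rw [← b0]; group
    _ = x2*(x1*s*x1)*(x0*s) := by rw [b1]; group
    _ = (x1*x0)*s*(x1*x0)*s := by nth_rewrite 1 [← h]; group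

lemma braid_conj_pow (d t0 t1 s : G) (hd : t1 * t0 = d)
    (ht0 : t0*s*t0 = s*t0*s) (ht1 : t1*s*t1 = s*t1*s)
    (hP : s*d*s*d = d*s*d*s) : ∀ k : ℤ,
    ((d^k * t0 * (d^k)⁻¹)*s*(d^k * t0 * (d^k)⁻¹) = s*(d^k * t0 * (d^k)⁻¹)*s) ∧
    ((d^k * t1 * (d^k)⁻¹)*s*(d^k * t1 * (d^k)⁻¹) = s*(d^k * t1 * (d^k)⁻¹)*s) := by
  intro k
  induction k using Int.induction_on with
  | zero => simpa using ⟨ht0, ht1⟩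
  | succ k ih =>
    set a := d^(k:ℤ) * t1 * (d^(k:ℤ))⁻¹ with ha
    set b := d^(k:ℤ) * t0 * (d^(k:ℤ))⁻¹ with hb
    have hab : a * b = d := by
      calc a * b = d^(k:ℤ) * (t1*t0) * (d^(k:ℤ))⁻¹ := by rw [ha, hb]; group
        _ = d^(k:ℤ) * d * (d^(k:ℤ))⁻¹ := by rw [hd]
        _ = d := by group
    have e0 : a*b*a⁻¹ = d^(k+1:ℤ) * t0 * (d^(k+1:ℤ))⁻¹ := by
      calc a*b*a⁻¹ = (a*b)*a⁻¹ := by group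
        _ = d * (d^(k:ℤ) * t1 * (d^(k:ℤ))⁻¹)⁻¹ := by rw [hab, ha]
        _ = d^(k+1:ℤ) * (t0 * (t1*t0)⁻¹) * (d^(k:ℤ))⁻¹ := by group
        _ = d^(k+1:ℤ) * (t0 * d⁻¹) * (d^(k:ℤ))⁻¹ := by rw [hd]
        _ = d^(k+1:ℤ) * t0 * (d^(k+1:ℤ))⁻¹ := by group
    have hb0 : (d^(k+1:ℤ) * t0 * (d^(k+1:ℤ))⁻¹)*s*(d^(k+1:ℤ) * t0 * (d^(k+1:ℤ))⁻¹)
        = s*(d^(k+1:ℤ) * t0 * (d^(k+1:ℤ))⁻¹)*s := by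
      rw [← e0]
      exact braid_step a b s ih.2 ih.1 (by rw [hab]; exact hP)
    refine ⟨hb0, ?_⟩
    -- odd part: a' = new even elt, b' = a
    set a' := d^(k+1:ℤ) * t0 * (d^(k+1:ℤ))⁻¹ with ha'
    have hab' : a' * a = d := by
      calc a' * a = d^(k+1:ℤ) * (t0 * d⁻¹ * t1) * (d^(k:ℤ))⁻¹ := by rw [ha', ha]; group
        _ = d^(k+1:ℤ) * (t0 * (t1*t0)⁻¹ * t1) * (d^(k:ℤ))⁻¹ := by rw [hd]
        _ = d^(k+1:ℤ) * (d^(k+1:ℤ))⁻¹ * d := by group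
        _ = d := by group
    have e1 : a'*a*a'⁻¹ = d^(k+1:ℤ) * t1 * (d^(k+1:ℤ))⁻¹ := by
      calc a'*a*a'⁻¹ = (a'*a)*a'⁻¹ := by group
        _ = d * (d^(k+1:ℤ) * t0 * (d^(k+1:ℤ))⁻¹)⁻¹ := by rw [hab', ha']
        _ = d^(k+1:ℤ) * ((d * t0⁻¹) * d⁻¹) * (d^(k+1:ℤ))⁻¹ * d := by group
        _ = d^(k+1:ℤ) * ((t1*t0 * t0⁻¹) * (t1*t0)⁻¹) * (d^(k+1:ℤ))⁻¹ * d := by rw [hd]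
        _ = d^(k+1:ℤ) * t1 * (d^(k+1:ℤ))⁻¹ * (d^(k+1:ℤ) * (t1*t0)⁻¹ * (d^(k+1:ℤ))⁻¹ * d) := by group
        _ = d^(k+1:ℤ) * t1 * (d^(k+1:ℤ))⁻¹ * (d^(k+1:ℤ) * d⁻¹ * (d^(k+1:ℤ))⁻¹ * d) := by rw [hd]
        _ = d^(k+1:ℤ) * t1 * (d^(k+1:ℤ))⁻¹ := by group
    rw [← e1]
    exact braid_step a' a s hb0 ih.2 (by rw [hab']; exact hP)
  | pred k ih =>
    have h2 : d * t0⁻¹ = t1 := by rw [← hd]; group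
    have h5 : t1⁻¹ * d = t0 := by rw [← hd]; group
    set a := d^(-k:ℤ) * t0 * (d^(-k:ℤ))⁻¹ with ha
    set c := d^(-k:ℤ) * t1 * (d^(-k:ℤ))⁻¹ with hc
    have hca : c * a = d := by
      calc c * a = d^(-k:ℤ) * (t1*t0) * (d^(-k:ℤ))⁻¹ := by rw [ha, hc]; group
        _ = d^(-k:ℤ) * d * (d^(-k:ℤ))⁻¹ := by rw [hd]
        _ = d := by group
    have e1 : a⁻¹*c*a = d^(-(k:ℤ)-1) * t1 * (d^(-(k:ℤ)-1))⁻¹ := by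
      calc a⁻¹*c*a = a⁻¹*(c*a) := by group
        _ = a⁻¹ * d := by rw [hca]
        _ = d^(-(k:ℤ)-1) * (d * t0⁻¹) * (d^(-(k:ℤ)-1))⁻¹ := by rw [ha]; group
        _ = d^(-(k:ℤ)-1) * t1 * (d^(-(k:ℤ)-1))⁻¹ := by rw [h2]
    have hb1 : (d^(-(k:ℤ)-1) * t1 * (d^(-(k:ℤ)-1))⁻¹)*s*(d^(-(k:ℤ)-1) * t1 * (d^(-(k:ℤ)-1))⁻¹)
        = s*(d^(-(k:ℤ)-1) * t1 * (d^(-(k:ℤ)-1))⁻¹)*s := by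
      rw [← e1]
      exact braid_step' a c s ih.1 ih.2 (by rw [hca]; exact hP)
    set a' := d^(-(k:ℤ)-1) * t1 * (d^(-(k:ℤ)-1))⁻¹ with ha'
    have hdt0 : d * t0 * d⁻¹ = t1 * t0 * t1⁻¹ := by rw [← hd]; group
    have hca' : a * a' = d := by
      calc a * a' = d^(-(k:ℤ)-1) * (d * t0 * d⁻¹ * t1) * (d^(-(k:ℤ)-1))⁻¹ := by
            rw [ha, ha']; group
        _ = d^(-(k:ℤ)-1) * (t1 * t0 * t1⁻¹ * t1) * (d^(-(k:ℤ)-1))⁻¹ := by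
            rw [show d * t0 * d⁻¹ * t1 = (d*t0*d⁻¹)*t1 from by group, hdt0]
        _ = d^(-(k:ℤ)-1) * (t1 * t0) * (d^(-(k:ℤ)-1))⁻¹ := by group
        _ = d^(-(k:ℤ)-1) * d * (d^(-(k:ℤ)-1))⁻¹ := by rw [hd]
        _ = d := by group
    have e0 : a'⁻¹*a*a' = d^(-(k:ℤ)-1) * t0 * (d^(-(k:ℤ)-1))⁻¹ := by
      calc a'⁻¹*a*a' = a'⁻¹*(a*a') := by group
        _ = a'⁻¹ * d := by rw [hca']
        _ = d^(-(k:ℤ)-1) * (t1⁻¹ * d) * (d^(-(k:ℤ)-1))⁻¹ := by rw [ha']; group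
        _ = d^(-(k:ℤ)-1) * t0 * (d^(-(k:ℤ)-1))⁻¹ := by rw [h5]
    refine ⟨?_, hb1⟩
    rw [← e0]
    exact braid_step' a' a s hb1 ih.1 (by rw [hca']; exact hP)

lemma tau_mul_even (d t0 t1 : G) (hd : t1*t0 = d) (k : ℤ) :
    (d^k * t0 * (d^k)⁻¹) * (d^(k-1) * t1 * (d^(k-1))⁻¹) = d := by
  have hdt0 : d * t0 * d⁻¹ = t1 * t0 * t1⁻¹ := by rw [← hd]; group
  calc (d^k * t0 * (d^k)⁻¹) * (d^(k-1) * t1 * (d^(k-1))⁻¹)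
      = d^(k-1) * ((d*t0*d⁻¹)*t1) * (d^(k-1))⁻¹ := by group
    _ = d^(k-1) * ((t1*t0*t1⁻¹)*t1) * (d^(k-1))⁻¹ := by rw [hdt0]
    _ = d^(k-1) * (t1*t0) * (d^(k-1))⁻¹ := by group
    _ = d^(k-1) * d * (d^(k-1))⁻¹ := by rw [hd]
    _ = d := by group

lemma tau_mul_odd (d t0 t1 : G) (hd : t1*t0 = d) (k : ℤ) :
    (d^k * t1 * (d^k)⁻¹) * (d^k * t0 * (d^k)⁻¹) = d := by
  calc (d^k * t1 * (d^k)⁻¹) * (d^k * t0 * (d^k)⁻¹)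
      = d^k * (t1*t0) * (d^k)⁻¹ := by group
    _ = d^k * d * (d^k)⁻¹ := by rw [hd]
    _ = d := by group

lemma closed_form (t : ℤ → G) (d : G) (hd : t 1 * t 0 = d)
    (hR : ∀ i, t i * t (i-1) = d) :
    ∀ k : ℤ, t (2*k) = d^k * t 0 * (d^k)⁻¹ ∧ t (2*k+1) = d^k * t 1 * (d^k)⁻¹ := by
  have h2 : d * (t 0)⁻¹ = t 1 := by rw [← hd]; group
  have h5 : (t 1)⁻¹ * d = t 0 := by rw [← hd]; group
  have hup : ∀ i, t (i+1) = d * (t i)⁻¹ := by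
    intro i
    have h := hR (i+1)
    rw [add_sub_cancel_right] at h
    exact eq_mul_inv_of_mul_eq h
  have hdn : ∀ i, t (i-1) = (t i)⁻¹ * d := by
    intro i
    rw [← hR i]; group
  intro k
  induction k using Int.induction_on with
  | zero =>
    constructor
    · rw [show (2*(0:ℤ)) = 0 by norm_num]; simp
    · rw [show (2*(0:ℤ)+1) = 1 by norm_num]; simp
  | succ k ih =>
    have he : t (2*((k:ℤ)+1)) = d^((k:ℤ)+1) * t 0 * (d^((k:ℤ)+1))⁻¹ := by
      rw [show (2*((k:ℤ)+1)) = (2*(k:ℤ)+1)+1 by ring, hup, ih.2]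
      calc d * (d^(k:ℤ) * t 1 * (d^(k:ℤ))⁻¹)⁻¹
          = d^((k:ℤ)+1) * ((t 1)⁻¹ * d) * (d^((k:ℤ)+1))⁻¹ := by group
        _ = d^((k:ℤ)+1) * t 0 * (d^((k:ℤ)+1))⁻¹ := by rw [h5]
    refine ⟨he, ?_⟩
    rw [show (2*((k:ℤ)+1)+1) = (2*((k:ℤ)+1))+1 from rfl, hup, he]
    calc d * (d^((k:ℤ)+1) * t 0 * (d^((k:ℤ)+1))⁻¹)⁻¹
        = d^((k:ℤ)+1) * (d * (t 0)⁻¹) * (d^((k:ℤ)+1))⁻¹ := by group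
      _ = d^((k:ℤ)+1) * t 1 * (d^((k:ℤ)+1))⁻¹ := by rw [h2]
  | pred k ih =>
    have ho : t (2*(-(k:ℤ)-1)+1) = d^(-(k:ℤ)-1) * t 1 * (d^(-(k:ℤ)-1))⁻¹ := by
      rw [show (2*(-(k:ℤ)-1)+1) = (2*(-(k:ℤ)))-1 by ring, hdn, ih.1]
      calc (d^(-(k:ℤ)) * t 0 * (d^(-(k:ℤ)))⁻¹)⁻¹ * d
          = d^(-(k:ℤ)-1) * (d * (t 0)⁻¹) * (d^(-(k:ℤ)-1))⁻¹ := by group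
        _ = d^(-(k:ℤ)-1) * t 1 * (d^(-(k:ℤ)-1))⁻¹ := by rw [h2]
    refine ⟨?_, ho⟩
    rw [show (2*(-(k:ℤ)-1)) = (2*(-(k:ℤ)-1)+1)-1 by ring, hdn, ho]
    calc (d^(-(k:ℤ)-1) * t 1 * (d^(-(k:ℤ)-1))⁻¹)⁻¹ * d
        = d^(-(k:ℤ)-1) * ((t 1)⁻¹ * d) * (d^(-(k:ℤ)-1))⁻¹ := by group
      _ = d^(-(k:ℤ)-1) * t 0 * (d^(-(k:ℤ)-1))⁻¹ := by rw [h5]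

lemma rel_mk {α : Type*} {rels : Set (FreeGroup α)} {u v : FreeGroup α}
    (h : u⁻¹ * v ∈ rels) : PresentedGroup.mk rels u = PresentedGroup.mk rels v := by
  have h1 : PresentedGroup.mk rels (u⁻¹ * v) = 1 :=
    (QuotientGroup.eq_one_iff _).mpr (Subgroup.subset_normalClosure h)
  rw [map_mul, map_inv] at h1
  exact inv_mul_eq_one.mp h1

end EllipticD4Aux



/-!
STATEMENT 0: The group G(D̃₄^{(1,1)}) defined by the elliptic Dynkin presentation is
isomorphic to the group G'(D̃₄^{(1,1)}) defined by the new presentation with infinitely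
many generators tᵢ (i ∈ ℤ).
-/

namespace EllipticD4

/-- Generators of `G(D̃₄^{(1,1)})`: `Sum.inl i` is `tᵢ` (`i ∈ {0,1}`),
`Sum.inr j` is `sⱼ` (`j ∈ {1,2,3,4}`). -/
abbrev GenG : Type := Fin 2 ⊕ Fin 4

/-- Generators of `G'(D̃₄^{(1,1)})`: `Sum.inl i` is `tᵢ` (`i ∈ ℤ`),
`Sum.inr j` is `sⱼ` (`j ∈ {1,2,3,4}`). -/
abbrev GenG' : Type := ℤ ⊕ Fin 4

def tG (i : Fin 2) : FreeGroup GenG := FreeGroup.of (Sum.inl i)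
def sG (j : Fin 4) : FreeGroup GenG := FreeGroup.of (Sum.inr j)

/-- Relators of the elliptic Dynkin presentation of `G(D̃₄^{(1,1)})`. -/
def relsG : Set (FreeGroup GenG) :=
  { r | (∃ i j, r = (tG i * sG j * tG i)⁻¹ * (sG j * tG i * sG j)) ∨
        (∃ i j, i ≠ j ∧ r = (sG i * sG j)⁻¹ * (sG j * sG i)) ∨
        (∃ i, r = (sG i * tG 1 * tG 0 * sG i * tG 1 * tG 0)⁻¹ *
                  (tG 1 * tG 0 * sG i * tG 1 * tG 0 * sG i)) }

def tG' (i : ℤ) : FreeGroup GenG' := FreeGroup.of (Sum.inl i)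
def sG' (j : Fin 4) : FreeGroup GenG' := FreeGroup.of (Sum.inr j)

/-- Relators of the new presentation of `G'(D̃₄^{(1,1)})`. -/
def relsG' : Set (FreeGroup GenG') :=
  { r | (∃ i j, r = (tG' i * sG' j * tG' i)⁻¹ * (sG' j * tG' i * sG' j)) ∨
        (∃ i j, i ≠ j ∧ r = (sG' i * sG' j)⁻¹ * (sG' j * sG' i)) ∨
        (∃ i j : ℤ, r = (tG' i * tG' (i - 1))⁻¹ * (tG' j * tG' (j - 1))) }


section AuxDefs

open EllipticD4Aux

/-- Images of the generators `t₀, t₁` in `G`. -/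
def T (i : Fin 2) : PresentedGroup relsG := PresentedGroup.of (Sum.inl i)
/-- Images of the generators `s₁,…,s₄` in `G`. -/
def S (j : Fin 4) : PresentedGroup relsG := PresentedGroup.of (Sum.inr j)
/-- The element `Δ = t₁ t₀` of `G`. -/
def D : PresentedGroup relsG := T 1 * T 0
/-- Images of the generators `tᵢ` in `G'`. -/
def T' (i : ℤ) : PresentedGroup relsG' := PresentedGroup.of (Sum.inl i)
/-- Images of the generators `s₁,…,s₄` in `G'`. -/
def S' (j : Fin 4) : PresentedGroup relsG' := PresentedGroup.of (Sum.inr j)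
/-- The element `Δ = t₁ t₀` of `G'`. -/
def D' : PresentedGroup relsG' := T' 1 * T' 0

lemma mk_tG (i : Fin 2) : PresentedGroup.mk relsG (tG i) = T i := rfl
lemma mk_sG (j : Fin 4) : PresentedGroup.mk relsG (sG j) = S j := rfl
lemma mk_tG' (i : ℤ) : PresentedGroup.mk relsG' (tG' i) = T' i := rfl
lemma mk_sG' (j : Fin 4) : PresentedGroup.mk relsG' (sG' j) = S' j := rfl

lemma braidG (i : Fin 2) (j : Fin 4) : T i * S j * T i = S j * T i * S j := by
  have h := rel_mk (rels := relsG) (u := tG i * sG j * tG i) (v := sG j * tG i * sG j)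
    (Or.inl ⟨i, j, rfl⟩)
  simpa only [map_mul, mk_tG, mk_sG] using h

lemma commG (i j : Fin 4) (hij : i ≠ j) : S i * S j = S j * S i := by
  have h := rel_mk (rels := relsG) (u := sG i * sG j) (v := sG j * sG i)
    (Or.inr (Or.inl ⟨i, j, hij, rfl⟩))
  simpa only [map_mul, mk_sG] using h

lemma P3G (j : Fin 4) : S j * D * S j * D = D * S j * D * S j := by
  have h := rel_mk (rels := relsG)
    (u := sG j * tG 1 * tG 0 * sG j * tG 1 * tG 0)
    (v := tG 1 * tG 0 * sG j * tG 1 * tG 0 * sG j)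
    (Or.inr (Or.inr ⟨j, rfl⟩))
  simp only [map_mul, mk_tG, mk_sG] at h
  show S j * (T 1 * T 0) * S j * (T 1 * T 0) = (T 1 * T 0) * S j * (T 1 * T 0) * S j
  simp only [mul_assoc] at h ⊢
  exact h

lemma braidG' (i : ℤ) (j : Fin 4) : T' i * S' j * T' i = S' j * T' i * S' j := by
  have h := rel_mk (rels := relsG') (u := tG' i * sG' j * tG' i) (v := sG' j * tG' i * sG' j)
    (Or.inl ⟨i, j, rfl⟩)
  simpa only [map_mul, mk_tG', mk_sG'] using h

lemma commG' (i j : Fin 4) (hij : i ≠ j) : S' i * S' j = S' j * S' i := by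
  have h := rel_mk (rels := relsG') (u := sG' i * sG' j) (v := sG' j * sG' i)
    (Or.inr (Or.inl ⟨i, j, hij, rfl⟩))
  simpa only [map_mul, mk_sG'] using h

lemma R3G' (i : ℤ) : T' i * T' (i-1) = D' := by
  have h := rel_mk (rels := relsG') (u := tG' i * tG' (i-1)) (v := tG' 1 * tG' (1-1))
    (Or.inr (Or.inr ⟨i, 1, rfl⟩))
  simp only [map_mul, mk_tG'] at h
  rw [show (1:ℤ)-1 = 0 by norm_num] at h
  exact h

lemma P3G' (j : Fin 4) : S' j * D' * S' j * D' = D' * S' j * D' * S' j := by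
  have h21 : T' 2 * T' 1 = T' 1 * T' 0 := by
    have h := R3G' 2
    rw [show (2:ℤ)-1 = 1 by norm_num] at h
    exact h
  have h := P3_of_braid (T' 0) (T' 1) (T' 2) (S' j)
    (braidG' 0 j) (braidG' 1 j) (braidG' 2 j) h21
  show S' j * (T' 1 * T' 0) * S' j * (T' 1 * T' 0)
      = (T' 1 * T' 0) * S' j * (T' 1 * T' 0) * S' j
  exact h

/-- The elements `tₙ` of `G`, for all `n ∈ ℤ`. -/
def tau (n : ℤ) : PresentedGroup relsG :=
  D^(n/2) * T (if n % 2 = 0 then 0 else 1) * (D^(n/2))⁻¹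

lemma tau_zero : tau 0 = T 0 := by
  unfold tau
  rw [show ((0:ℤ)/2) = 0 by decide, if_pos (show (0:ℤ)%2 = 0 by decide)]
  group

lemma tau_one : tau 1 = T 1 := by
  unfold tau
  rw [show ((1:ℤ)/2) = 0 by decide, if_neg (show ¬((1:ℤ)%2 = 0) by decide)]
  group

lemma tau_braid (n : ℤ) (j : Fin 4) : tau n * S j * tau n = S j * tau n * S j := by
  have h := braid_conj_pow D (T 0) (T 1) (S j) rfl (braidG 0 j) (braidG 1 j) (P3G j) (n/2)
  rcases Int.emod_two_eq n with h0 | h0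
  · unfold tau; rw [if_pos h0]; exact h.1
  · unfold tau; rw [if_neg (by rw [h0]; norm_num)]; exact h.2

lemma tau_mul (n : ℤ) : tau n * tau (n-1) = D := by
  rcases Int.emod_two_eq n with h0 | h0
  · have e1 : (n-1) % 2 = 1 := by omega
    have e2 : (n-1)/2 = n/2 - 1 := by omega
    unfold tau
    rw [if_pos h0, if_neg (by rw [e1]; norm_num), e2]
    exact tau_mul_even D (T 0) (T 1) rfl (n/2)
  · have e1 : (n-1) % 2 = 0 := by omega
    have e2 : (n-1)/2 = n/2 := by omega
    unfold tau
    rw [if_neg (by rw [h0]; norm_num), if_pos e1, e2]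
    exact tau_mul_odd D (T 0) (T 1) rfl (n/2)

/-- The map on generators defining `ψ : G' → G`. -/
def psif : GenG' → PresentedGroup relsG := Sum.elim tau S

lemma psi_rels : ∀ r ∈ relsG', FreeGroup.lift psif r = 1 := by
  intro r hr
  rcases hr with ⟨i, j, rfl⟩ | ⟨i, j, hij, rfl⟩ | ⟨i, j, rfl⟩ <;>
    simp only [map_mul, map_inv, tG', sG', FreeGroup.lift_apply_of, psif,
      Sum.elim_inl, Sum.elim_inr]
  · exact inv_mul_eq_one.mpr (tau_braid i j)
  · exact inv_mul_eq_one.mpr (commG i j hij)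
  · exact inv_mul_eq_one.mpr (by rw [tau_mul i, tau_mul j])

/-- The homomorphism `ψ : G' → G`. -/
def psi : PresentedGroup relsG' →* PresentedGroup relsG := PresentedGroup.toGroup psi_rels

/-- The map on generators defining `φ : G → G'`. -/
def phif : GenG → PresentedGroup relsG' := Sum.elim (fun i => T' (i.val : ℤ)) S'

lemma phi_rels : ∀ r ∈ relsG, FreeGroup.lift phif r = 1 := by
  intro r hr
  rcases hr with ⟨i, j, rfl⟩ | ⟨i, j, hij, rfl⟩ | ⟨j, rfl⟩ <;>
    simp only [map_mul, map_inv, tG, sG, FreeGroup.lift_apply_of, phif,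
      Sum.elim_inl, Sum.elim_inr]
  · exact inv_mul_eq_one.mpr (braidG' (i.val : ℤ) j)
  · exact inv_mul_eq_one.mpr (commG' i j hij)
  · rw [show (((1 : Fin 2).val : ℤ)) = 1 by norm_num,
      show (((0 : Fin 2).val : ℤ)) = 0 by norm_num]
    refine inv_mul_eq_one.mpr ?_
    have h := P3G' j
    rw [show D' = T' 1 * T' 0 from rfl] at h
    simp only [mul_assoc] at h ⊢
    exact h

/-- The homomorphism `φ : G → G'`. -/
def phi : PresentedGroup relsG →* PresentedGroup relsG' := PresentedGroup.toGroup phi_rels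

lemma phi_T (i : Fin 2) : phi (T i) = T' (i.val : ℤ) := PresentedGroup.toGroup.of phi_rels
lemma phi_S (j : Fin 4) : phi (S j) = S' j := PresentedGroup.toGroup.of phi_rels
lemma psi_T' (n : ℤ) : psi (T' n) = tau n := PresentedGroup.toGroup.of psi_rels
lemma psi_S' (j : Fin 4) : psi (S' j) = S j := PresentedGroup.toGroup.of psi_rels

lemma phi_D : phi D = D' := by
  show phi (T 1 * T 0) = T' 1 * T' 0
  rw [map_mul, phi_T, phi_T,
    show (((1 : Fin 2).val : ℤ)) = 1 by norm_num,
    show (((0 : Fin 2).val : ℤ)) = 0 by norm_num]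

lemma phi_tau (n : ℤ) : phi (tau n) = T' n := by
  rcases Int.emod_two_eq n with h0 | h0
  · have e : 2*(n/2) = n := by omega
    have hc := (closed_form T' D' rfl R3G' (n/2)).1
    rw [e] at hc
    unfold tau
    rw [if_pos h0, map_mul, map_mul, map_inv, map_zpow, phi_D, phi_T,
      show (((0 : Fin 2).val : ℤ)) = 0 by norm_num, ← hc]
  · have e : 2*(n/2)+1 = n := by omega
    have hc := (closed_form T' D' rfl R3G' (n/2)).2
    rw [e] at hc
    unfold tau
    rw [if_neg (by rw [h0]; norm_num), map_mul, map_mul, map_inv, map_zpow, phi_D, phi_T,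
      show (((1 : Fin 2).val : ℤ)) = 1 by norm_num, ← hc]

lemma comp1 : psi.comp phi = MonoidHom.id (PresentedGroup relsG) := by
  apply PresentedGroup.ext
  intro x
  rcases x with i | j
  · show psi (phi (T i)) = T i
    rw [phi_T, psi_T']
    fin_cases i
    · exact tau_zero
    · exact tau_one
  · show psi (phi (S j)) = S j
    rw [phi_S, psi_S']

lemma comp2 : phi.comp psi = MonoidHom.id (PresentedGroup relsG') := by
  apply PresentedGroup.ext
  intro x
  rcases x with n | j
  · show phi (psi (T' n)) = T' n
    rw [psi_T', phi_tau]
  · show phi (psi (S' j)) = S' j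
    rw [psi_S', phi_S]

end AuxDefs

theorem G_iso_G' : Nonempty (PresentedGroup relsG ≃* PresentedGroup relsG') := by
  exact ⟨MonoidHom.toMulEquiv phi psi comp1 comp2⟩

end EllipticD4
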